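/- (Quantitative content of Theorem 1.) Suppose there is a constant L ≥ 0 such that ‖π_MPC(x, θ_nom) + G(x)(θ − θ_nom) − π_MPC(x, θ)‖ ≤ L‖θ − θ_nom‖ for all x ∈ ℝ^n and all θ ∈ Θ. Let η > 0 and suppose there exists ε > 0 with ‖e_π(x)‖ + ε < η for all x ∈ ℝ^n. Then for every parameter θ in the set Θ̃ := { θ ∈ Θ : (sup_{x ∈ ℝ^n} ‖e_∇(x)‖ + L)·‖θ − θ_nom‖ < ε } and every state x ∈ ℝ^n, the input disturbance incurred by replacing the exact MPC with the parameter-adaptive AMPC satisfies ‖π_AMPC(x, θ) − π_MPC(x, θ)‖ < η; in particular it is at most η, the maximum allowable input disturbance of the robust MPC. -/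

import Mathlib

open scoped ENNReal

/-- quantitative content of Theorem 1 of the paper.  If the
linear-predictor error bound holds with constant `L`, and
`‖e_π(x)‖ + ε < η` for all states `x`, then for every parameter `θ` in
`Θ̃ := {θ ∈ Θ | (sup_x ‖e_∇(x)‖ + L)·‖θ − θ_nom‖ < ε}` (the supremum taken in
`[0, ∞]`) and every state `x`, the input disturbance incurred by replacing the
exact MPC with the parameter-adaptive AMPC is smaller than `η`. -/
theorem ampc_stability_disturbance_bound
    (n m q : ℕ)
    (Θ : Set (EuclideanSpace ℝ (Fin q)))
    (θnom : EuclideanSpace ℝ (Fin q)) (hθnom : θnom ∈ Θ)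
    (πMPC : EuclideanSpace ℝ (Fin n) → EuclideanSpace ℝ (Fin q) → EuclideanSpace ℝ (Fin m))
    (πNN : EuclideanSpace ℝ (Fin n) → EuclideanSpace ℝ (Fin m))
    (G πGrad : EuclideanSpace ℝ (Fin n) →
      (EuclideanSpace ℝ (Fin q) →L[ℝ] EuclideanSpace ℝ (Fin m)))
    (eπ : EuclideanSpace ℝ (Fin n) → EuclideanSpace ℝ (Fin m))
    (heπ : ∀ x, eπ x = πNN x - πMPC x θnom)
    (eGrad : EuclideanSpace ℝ (Fin n) →
      (EuclideanSpace ℝ (Fin q) →L[ℝ] EuclideanSpace ℝ (Fin m)))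
    (heGrad : ∀ x, eGrad x = πGrad x - G x)
    (πAMPC : EuclideanSpace ℝ (Fin n) → EuclideanSpace ℝ (Fin q) → EuclideanSpace ℝ (Fin m))
    (hAMPC : ∀ x θ, πAMPC x θ = πNN x + πGrad x (θ - θnom))
    (L : ℝ) (hL : 0 ≤ L)
    (hpred : ∀ x : EuclideanSpace ℝ (Fin n), ∀ θ ∈ Θ,
      ‖πMPC x θnom + G x (θ - θnom) - πMPC x θ‖ ≤ L * ‖θ - θnom‖)
    (η : ℝ) (hη : 0 < η)
    (ε : ℝ) (hε : 0 < ε)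
    (herr : ∀ x : EuclideanSpace ℝ (Fin n), ‖eπ x‖ + ε < η) :
    ∀ θ ∈ {θ ∈ Θ |
        ((⨆ x : EuclideanSpace ℝ (Fin n), (‖eGrad x‖₊ : ℝ≥0∞)) + ENNReal.ofReal L) *
          ENNReal.ofReal ‖θ - θnom‖ < ENNReal.ofReal ε},
      ∀ x : EuclideanSpace ℝ (Fin n),
        ‖πAMPC x θ - πMPC x θ‖ < η := by
  intro θ hθ x
  obtain ⟨hθΘ, hθsmall⟩ := hθ
  -- real-valued bound from the ENNReal condition
  have hpt : (ENNReal.ofReal ‖eGrad x‖ + ENNReal.ofReal L) *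
      ENNReal.ofReal ‖θ - θnom‖ < ENNReal.ofReal ε := by
    refine lt_of_le_of_lt (mul_le_mul_left (add_le_add_left ?_ _) _) hθsmall
    rw [ofReal_norm]
    exact le_iSup (fun x => ((‖eGrad x‖₊ : ℝ≥0∞))) x
  have hreal : (‖eGrad x‖ + L) * ‖θ - θnom‖ < ε := by
    have : ENNReal.ofReal ((‖eGrad x‖ + L) * ‖θ - θnom‖) < ENNReal.ofReal ε := by
      rwa [ENNReal.ofReal_mul (by positivity), ENNReal.ofReal_add (norm_nonneg _) hL]
    exact (ENNReal.ofReal_lt_ofReal_iff hε).mp this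
  have hkey : πAMPC x θ - πMPC x θ =
      eπ x + (eGrad x) (θ - θnom) + (πMPC x θnom + G x (θ - θnom) - πMPC x θ) := by
    rw [hAMPC, heπ x, heGrad x]
    simp only [ContinuousLinearMap.sub_apply]
    abel
  calc ‖πAMPC x θ - πMPC x θ‖
      ≤ ‖eπ x‖ + ‖(eGrad x) (θ - θnom)‖ + ‖πMPC x θnom + G x (θ - θnom) - πMPC x θ‖ := by
        rw [hkey]; exact norm_add₃_le
    _ ≤ ‖eπ x‖ + ‖eGrad x‖ * ‖θ - θnom‖ + L * ‖θ - θnom‖ := by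
        gcongr
        · exact (eGrad x).le_opNorm _
        · exact hpred x θ hθΘ
    _ = ‖eπ x‖ + (‖eGrad x‖ + L) * ‖θ - θnom‖ := by ring
    _ < ‖eπ x‖ + ε := by linarith
    _ < η := herr x
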